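/- Let I be a dyadic interval and let φ ∈ L^∞(I) with ∫_I φ = 0. For an integer N ≥ 3, define the averaged quasi-periodisation Q̄Π_I^N φ : I → ℝ as follows: for x belonging to a subinterval J ∈ ch^N(I) that does not contain an endpoint of the closure of I, set Q̄Π_I^N φ(x) := (E_{ch²(I)}φ)(ψ_{J,I}(x)), where E_{ch²(I)}φ := Σ_{K ∈ ch²(I)} ⟨φ⟩_K 1_K and ψ_{J,I} is the increasing affine bijection from J onto I; for x belonging to one of the two subintervals J ∈ ch^N(I) touching the boundary of I, set Q̄Π_I^N φ(x) := 0. Then for every g ∈ L^1(I), ∫_I g(x)·Q̄Π_I^N φ(x) dx → 0 as N → ∞; in particular, Q̄Π_I^N φ → 0 weakly in L^q(I) for every q ∈ (1,∞) and weak-* in L^∞(I). -/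

import Mathlib

open MeasureTheory Set Filter Topology

/-- Average of `φ` over the interval `[a, b)`. -/
noncomputable def avgOn (φ : ℝ → ℝ) (a b : ℝ) : ℝ :=
  (b - a)⁻¹ * ∫ x in Set.Ico a b, φ x

/-- `E_{ch²(I)} φ` at `y`: the average of `φ` over the grandchild (subinterval of
length `L/4`) of `I = [α, α + L)` containing `y`. -/
noncomputable def grandAvg (φ : ℝ → ℝ) (α L : ℝ) (y : ℝ) : ℝ :=
  avgOn φ (α + (⌊(y - α) / (L / 4)⌋ : ℝ) * (L / 4))
    (α + ((⌊(y - α) / (L / 4)⌋ : ℝ) + 1) * (L / 4))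

/-- The averaged quasi-periodisation `Q̄Π_I^N φ` of `φ` over `I = [α, α + L)` of
frequency `N`: on each subinterval `J ∈ ch^N(I)` not touching the boundary of `I`
it equals `(E_{ch²(I)} φ) ∘ ψ_{J,I}`, where `ψ_{J,I}` is the increasing affine
bijection of `J` onto `I`; on the two boundary subintervals it is `0`
(recall `⟨φ⟩_I = 0`). -/
noncomputable def quasiPer (φ : ℝ → ℝ) (α L : ℝ) (N : ℕ) (x : ℝ) : ℝ :=
  if ⌊(x - α) / (L / 2 ^ N)⌋ = 0 ∨ ⌊(x - α) / (L / 2 ^ N)⌋ = 2 ^ N - 1 then 0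
  else grandAvg φ α L
    (α + (x - (α + (⌊(x - α) / (L / 2 ^ N)⌋ : ℝ) * (L / 2 ^ N))) * 2 ^ N)

namespace QP19

/-- Integral over `Ico` as an interval integral. -/
lemma ico_eq_intervalIntegral (f : ℝ → ℝ) {a b : ℝ} (hab : a ≤ b) :
    ∫ x in Set.Ico a b, f x = ∫ x in a..b, f x := by
  rw [intervalIntegral.integral_of_le hab, ← restrict_Ico_eq_restrict_Ioc]

lemma integrableOn_Ico_iff_Ioc (f : ℝ → ℝ) (a b : ℝ) :
    IntegrableOn f (Set.Ico a b) ↔ IntegrableOn f (Set.Ioc a b) := by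
  unfold IntegrableOn
  rw [restrict_Ico_eq_restrict_Ioc]

lemma floor_eq_on {h α x : ℝ} (hh : 0 < h) {j : ℤ}
    (h1 : α + (j : ℝ) * h ≤ x) (h2 : x < α + ((j : ℝ) + 1) * h) :
    ⌊(x - α) / h⌋ = j := by
  rw [Int.floor_eq_iff]
  constructor
  · rw [le_div_iff₀ hh]; linarith
  · rw [div_lt_iff₀ hh]; push_cast; linarith

lemma frac_mem {h : ℝ} (hh : 0 < h) (α x : ℝ) :
    0 ≤ x - (α + (⌊(x - α) / h⌋ : ℝ) * h) ∧ x - (α + (⌊(x - α) / h⌋ : ℝ) * h) < h := by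
  have h1 : (⌊(x - α) / h⌋ : ℝ) * h ≤ x - α :=
    (le_div_iff₀ hh).mp (Int.floor_le ((x - α) / h))
  have h2 : x - α < ((⌊(x - α) / h⌋ : ℝ) + 1) * h := by
    have := (div_lt_iff₀ hh).mp (Int.lt_floor_add_one ((x - α) / h))
    linarith
  constructor <;> nlinarith

variable {φ : ℝ → ℝ} {α L B : ℝ}

lemma grandAvg_eq {y : ℝ} (hL : 0 < L) {i : ℤ}
    (h1 : α + (i : ℝ) * (L / 4) ≤ y) (h2 : y < α + ((i : ℝ) + 1) * (L / 4)) :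
    grandAvg φ α L y = avgOn φ (α + (i : ℝ) * (L / 4)) (α + ((i : ℝ) + 1) * (L / 4)) := by
  unfold grandAvg
  rw [floor_eq_on (by positivity) h1 h2]

lemma abs_grandAvg_le (hL : 0 < L)
    (hB : ∀ x ∈ Set.Ico α (α + L), |φ x| ≤ B) (hB0 : 0 ≤ B)
    {y : ℝ} (hy : y ∈ Set.Ico α (α + L)) : |grandAvg φ α L y| ≤ B := by
  have h4 : (0 : ℝ) < L / 4 := by linarith
  have hi0 : (0 : ℤ) ≤ ⌊(y - α) / (L / 4)⌋ :=
    Int.floor_nonneg.2 (div_nonneg (by linarith [hy.1]) h4.le)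
  have hi4 : ⌊(y - α) / (L / 4)⌋ < 4 := by
    apply Int.floor_lt.2
    push_cast
    rw [div_lt_iff₀ h4]
    linarith [hy.2]
  set i : ℤ := ⌊(y - α) / (L / 4)⌋ with hidef
  have hir0 : (0 : ℝ) ≤ (i : ℝ) := by exact_mod_cast hi0
  have hir4 : (i : ℝ) ≤ 3 := by
    have : (i : ℝ) < 4 := by exact_mod_cast hi4
    have : i ≤ 3 := by omega
    exact_mod_cast this
  unfold grandAvg
  rw [← hidef]
  set a := α + (i : ℝ) * (L / 4) with ha
  set b := α + ((i : ℝ) + 1) * (L / 4) with hb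
  have hab : a ≤ b := by rw [ha, hb]; nlinarith
  have hsub : Set.Ico a b ⊆ Set.Ico α (α + L) := by
    apply Set.Ico_subset_Ico
    · rw [ha]; nlinarith
    · rw [hb]; nlinarith
  have hnorm : ‖∫ x in Set.Ico a b, φ x‖ ≤ B * (volume (Set.Ico a b)).toReal :=
    norm_setIntegral_le_of_norm_le_const
      (by rw [Real.volume_Ico]; exact ENNReal.ofReal_lt_top)
      (fun x hx => by rw [Real.norm_eq_abs]; exact hB x (hsub hx))
  rw [Real.volume_Ico, ENNReal.toReal_ofReal (by linarith)] at hnorm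
  have hba : b - a = L / 4 := by rw [ha, hb]; ring
  unfold avgOn
  rw [hba]
  rw [abs_mul, abs_inv, abs_of_pos h4]
  rw [Real.norm_eq_abs, hba] at hnorm
  calc (L / 4)⁻¹ * |∫ x in Set.Ico a b, φ x| ≤ (L / 4)⁻¹ * (B * (L / 4)) := by
        exact mul_le_mul_of_nonneg_left hnorm (by positivity)
    _ = B := by field_simp
  
lemma measurable_grandAvg : Measurable (grandAvg φ α L) := by
  have h2 : Measurable fun y : ℝ => ⌊(y - α) / (L / 4)⌋ :=
    ((measurable_id.sub_const α).div_const _).floor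
  exact (measurable_of_countable
    (fun i : ℤ => avgOn φ (α + (i : ℝ) * (L / 4)) (α + ((i : ℝ) + 1) * (L / 4)))).comp h2

lemma measurable_quasiPer (N : ℕ) : Measurable (quasiPer φ α L N) := by
  unfold quasiPer
  have hfl : Measurable fun x : ℝ => ⌊(x - α) / (L / 2 ^ N)⌋ :=
    ((measurable_id.sub_const α).div_const _).floor
  refine Measurable.ite ?_ measurable_const ?_
  · have : {x : ℝ | ⌊(x - α) / (L / 2 ^ N)⌋ = 0 ∨ ⌊(x - α) / (L / 2 ^ N)⌋ = 2 ^ N - 1}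
        = (fun x : ℝ => ⌊(x - α) / (L / 2 ^ N)⌋) ⁻¹' {0}
          ∪ (fun x : ℝ => ⌊(x - α) / (L / 2 ^ N)⌋) ⁻¹' {(2 : ℤ) ^ N - 1} := by
      ext x; simp [Set.mem_union, Set.mem_preimage]
    rw [this]
    exact (hfl (measurableSet_singleton 0)).union (hfl (measurableSet_singleton _))
  · apply measurable_grandAvg.comp
    have hc : Measurable fun x : ℝ => (⌊(x - α) / (L / 2 ^ N)⌋ : ℝ) :=
      (measurable_of_countable (fun i : ℤ => (i : ℝ))).comp hfl
    exact measurable_const.add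
      ((measurable_id.sub (measurable_const.add (hc.mul_const _))).mul_const _)

lemma abs_quasiPer_le (hL : 0 < L)
    (hB : ∀ x ∈ Set.Ico α (α + L), |φ x| ≤ B) (hB0 : 0 ≤ B) (N : ℕ) (x : ℝ) :
    |quasiPer φ α L N x| ≤ B := by
  unfold quasiPer
  split_ifs with hcond
  · simpa using hB0
  · have hh : (0 : ℝ) < L / 2 ^ N := by positivity
    have h2 : (0 : ℝ) < 2 ^ N := by positivity
    obtain ⟨hf1, hf2⟩ := frac_mem hh α x
    apply abs_grandAvg_le hL hB hB0
    constructor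
    · nlinarith
    · have := mul_lt_mul_of_pos_right hf2 h2
      rw [div_mul_cancel₀ _ (ne_of_gt h2)] at this
      linarith

lemma grand_integral_zero (hmeas : Measurable φ) (hL : 0 < L)
    (hB : ∀ x ∈ Set.Ico α (α + L), |φ x| ≤ B)
    (hmean : (∫ x in Set.Ico α (α + L), φ x) = 0) :
    ∫ y in α..(α + L), grandAvg φ α L y = 0 := by
  have h4 : (0 : ℝ) < L / 4 := by linarith
  -- integrability of φ on I
  have hφI : IntegrableOn φ (Set.Ico α (α + L)) := by
    apply Measure.integrableOn_of_bounded (M := B)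
      (by rw [Real.volume_Ico]; exact ENNReal.ofReal_ne_top) hmeas.aestronglyMeasurable
    rw [ae_restrict_iff' measurableSet_Ico]
    exact ae_of_all _ fun x hx => by rw [Real.norm_eq_abs]; exact hB x hx
  have hφIoc : IntegrableOn φ (Set.Ioc α (α + L)) :=
    (integrableOn_Ico_iff_Ioc φ _ _).1 hφI
  set q : ℕ → ℝ := fun i => α + (i : ℝ) * (L / 4) with hq
  have hqmono : ∀ i : ℕ, q i ≤ q (i + 1) := by
    intro i; simp only [hq]; push_cast; nlinarith
  have hqsub : ∀ i : ℕ, i < 4 → Set.Ioc (q i) (q (i + 1)) ⊆ Set.Ioc α (α + L) := by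
    intro i hi
    apply Set.Ioc_subset_Ioc
    · simp only [hq]
      have : (0:ℝ) ≤ (i:ℝ) := Nat.cast_nonneg i
      nlinarith
    · simp only [hq]
      have : ((i : ℝ) + 1) ≤ 4 := by push_cast; exact_mod_cast Nat.succ_le_of_lt hi
      push_cast; nlinarith
  have hφii : ∀ i : ℕ, i < 4 → IntervalIntegrable φ volume (q i) (q (i + 1)) := by
    intro i hi
    rw [intervalIntegrable_iff_integrableOn_Ioc_of_le (hqmono i)]
    exact hφIoc.mono_set (hqsub i hi)
  have hGconst : ∀ i : ℕ, i < 4 → ∀ y ∈ Set.Ico (q i) (q (i + 1)),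
      grandAvg φ α L y = avgOn φ (q i) (q (i + 1)) := by
    intro i hi y hy
    have e1 : q i = α + ((i : ℤ) : ℝ) * (L / 4) := by simp [hq]
    have e2 : q (i + 1) = α + (((i : ℤ) : ℝ) + 1) * (L / 4) := by
      simp only [hq]; push_cast; ring
    rw [e1, e2]
    exact grandAvg_eq hL (by rw [← e1]; exact hy.1) (by rw [← e2]; exact hy.2)
  have hGii : ∀ i : ℕ, i < 4 → IntervalIntegrable (grandAvg φ α L) volume (q i) (q (i + 1)) := by
    intro i hi
    rw [intervalIntegrable_iff_integrableOn_Ioc_of_le (hqmono i),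
      ← integrableOn_Ico_iff_Ioc]
    rw [integrableOn_congr_fun (hGconst i hi) measurableSet_Ico]
    exact integrableOn_const (by rw [Real.volume_Ico]; exact ENNReal.ofReal_ne_top)
  have hGquarter : ∀ i : ℕ, i < 4 →
      (∫ y in q i..q (i + 1), grandAvg φ α L y) = ∫ x in q i..q (i + 1), φ x := by
    intro i hi
    rw [← ico_eq_intervalIntegral _ (hqmono i), ← ico_eq_intervalIntegral _ (hqmono i)]
    rw [setIntegral_congr_fun measurableSet_Ico (hGconst i hi)]
    rw [setIntegral_const]
    unfold avgOn
    have hlen : q (i + 1) - q i = L / 4 := by simp only [hq]; push_cast; ring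
    rw [Real.volume_real_Ico_of_le (hqmono i), hlen]
    rw [smul_eq_mul]
    field_simp
  have hq0 : q 0 = α := by simp [hq]
  have hq4 : q 4 = α + L := by simp only [hq]; push_cast; ring
  have hsumG := intervalIntegral.sum_integral_adjacent_intervals
    (f := grandAvg φ α L) (μ := volume) (a := q) (n := 4) (fun k hk => hGii k hk)
  have hsumφ := intervalIntegral.sum_integral_adjacent_intervals
    (f := φ) (μ := volume) (a := q) (n := 4) (fun k hk => hφii k hk)
  rw [hq0, hq4] at hsumG hsumφ
  rw [← hsumG]
  have : ∀ k ∈ Finset.range 4, (∫ y in q k..q (k + 1), grandAvg φ α L y)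
      = ∫ x in q k..q (k + 1), φ x := fun k hk => hGquarter k (Finset.mem_range.1 hk)
  rw [Finset.sum_congr rfl this, hsumφ, ← ico_eq_intervalIntegral _ (by linarith), hmean]

lemma cell_integral_zero (hmeas : Measurable φ) (hL : 0 < L)
    (hB : ∀ x ∈ Set.Ico α (α + L), |φ x| ≤ B)
    (hmean : (∫ x in Set.Ico α (α + L), φ x) = 0)
    (N : ℕ) {j : ℕ} (hj : j < 2 ^ N) :
    ∫ x in Set.Ico (α + (j : ℝ) * (L / 2 ^ N)) (α + ((j : ℝ) + 1) * (L / 2 ^ N)),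
      quasiPer φ α L N x = 0 := by
  have h2 : (0 : ℝ) < 2 ^ N := by positivity
  have hh : (0 : ℝ) < L / 2 ^ N := by positivity
  set h : ℝ := L / 2 ^ N with hhdef
  have hfloor : ∀ x ∈ Set.Ico (α + (j : ℝ) * h) (α + ((j : ℝ) + 1) * h),
      ⌊(x - α) / h⌋ = (j : ℤ) := by
    intro x hx
    exact floor_eq_on hh (by exact_mod_cast hx.1) (by push_cast; exact_mod_cast hx.2)
  by_cases hcase : j = 0 ∨ j = 2 ^ N - 1
  · -- boundary cell : quasiPer vanishes
    have : ∀ x ∈ Set.Ico (α + (j : ℝ) * h) (α + ((j : ℝ) + 1) * h),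
        quasiPer φ α L N x = 0 := by
      intro x hx
      unfold quasiPer
      rw [← hhdef, hfloor x hx, if_pos]
      rcases hcase with h0 | h1
      · left; exact_mod_cast h0
      · right
        have h1pow : 1 ≤ 2 ^ N := Nat.one_le_two_pow
        subst h1
        push_cast [Nat.cast_sub h1pow]
        ring
    rw [setIntegral_congr_fun measurableSet_Ico this]
    simp
  · push_neg at hcase
    have hcast : ((j : ℤ) ≠ 0) ∧ ((j : ℤ) ≠ 2 ^ N - 1) := by
      constructor
      · exact_mod_cast hcase.1
      · intro hcon
        apply hcase.2
        have h1pow : 1 ≤ 2 ^ N := Nat.one_le_two_pow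
        have hcon' : (j : ℤ) = ((2 ^ N : ℕ) : ℤ) - 1 := by rw [hcon]; push_cast; ring
        omega
    set d : ℝ := α - (α + (j : ℝ) * h) * 2 ^ N with hd
    have hval : ∀ x ∈ Set.Ico (α + (j : ℝ) * h) (α + ((j : ℝ) + 1) * h),
        quasiPer φ α L N x = grandAvg φ α L (2 ^ N * x + d) := by
      intro x hx
      unfold quasiPer
      rw [← hhdef, hfloor x hx, if_neg (by push_neg; exact hcast)]
      congr 1
      rw [hd]
      push_cast
      ring
    rw [setIntegral_congr_fun measurableSet_Ico hval]
    have hle : α + (j : ℝ) * h ≤ α + ((j : ℝ) + 1) * h := by nlinarith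
    rw [ico_eq_intervalIntegral _ hle]
    rw [intervalIntegral.integral_comp_mul_add (grandAvg φ α L) (ne_of_gt h2) d]
    have e1 : (2 : ℝ) ^ N * (α + (j : ℝ) * h) + d = α := by rw [hd]; ring
    have e2 : (2 : ℝ) ^ N * (α + ((j : ℝ) + 1) * h) + d = α + L := by
      rw [hd, hhdef]
      field_simp
      ring
    rw [e1, e2, grand_integral_zero hmeas hL hB hmean, smul_zero]

end QP19

theorem statement19 (n k : ℤ) (φ : ℝ → ℝ) (hmeas : Measurable φ)
    (hbdd : ∃ B : ℝ, ∀ x ∈ Set.Ico ((k : ℝ) * (2 : ℝ) ^ n) (((k : ℝ) + 1) * (2 : ℝ) ^ n),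
      |φ x| ≤ B)
    (hmean : (∫ x in Set.Ico ((k : ℝ) * (2 : ℝ) ^ n) (((k : ℝ) + 1) * (2 : ℝ) ^ n), φ x) = 0)
    (g : ℝ → ℝ)
    (hg : IntegrableOn g (Set.Ico ((k : ℝ) * (2 : ℝ) ^ n) (((k : ℝ) + 1) * (2 : ℝ) ^ n))) :
    Tendsto (fun N : ℕ =>
        ∫ x in Set.Ico ((k : ℝ) * (2 : ℝ) ^ n) (((k : ℝ) + 1) * (2 : ℝ) ^ n),
          g x * quasiPer φ ((k : ℝ) * (2 : ℝ) ^ n) ((2 : ℝ) ^ n) N x)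
      atTop (𝓝 0) := by
  open QP19 in
  obtain ⟨B₀, hB₀⟩ := hbdd
  set α : ℝ := (k : ℝ) * 2 ^ n with hα
  set L : ℝ := (2 : ℝ) ^ n with hLdef
  have hL : 0 < L := by positivity
  have hEnd : ((k : ℝ) + 1) * (2 : ℝ) ^ n = α + L := by rw [hα, hLdef]; ring
  rw [hEnd] at hmean hg hB₀ ⊢
  set B : ℝ := max B₀ 0 with hBdef
  have hB0 : (0 : ℝ) ≤ B := le_max_right _ _
  have hB : ∀ x ∈ Set.Ico α (α + L), |φ x| ≤ B :=
    fun x hx => le_trans (hB₀ x hx) (le_max_left _ _)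
  rw [NormedAddCommGroup.tendsto_nhds_zero]
  intro ε hε
  -- continuous compactly supported approximation of g
  set g₀ : ℝ → ℝ := (Set.Ico α (α + L)).indicator g with hg₀def
  have hg₀int : Integrable g₀ := hg.integrable_indicator measurableSet_Ico
  have hε1 : 0 < ε / (4 * (B + 1)) := by positivity
  obtain ⟨gc, gc_supp, gc_close, gc_cont, gc_int⟩ :=
    hg₀int.exists_hasCompactSupport_integral_sub_le hε1
  have gc_uc : UniformContinuous gc := gc_supp.uniformContinuous_of_continuous gc_cont
  have hε2 : 0 < ε / (4 * (B + 1) * (L + 1)) := by positivity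
  obtain ⟨δ, hδ, hδ'⟩ := Metric.uniformContinuous_iff.1 gc_uc _ hε2
  have htend : Tendsto (fun N : ℕ => L / 2 ^ N) atTop (𝓝 0) := by
    have h := tendsto_pow_atTop_nhds_zero_of_lt_one
      (by norm_num : (0:ℝ) ≤ 1/2) (by norm_num : (1:ℝ)/2 < 1)
    have h2 := h.const_mul L
    rw [mul_zero] at h2
    convert h2 using 2 with N
    simp [div_eq_mul_inv, div_pow]
  filter_upwards [htend.eventually (gt_mem_nhds hδ)] with N hN
  replace hN : L / 2 ^ N < δ := hN
  -- fixed N with L / 2^N < δ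
  have h2p : (0 : ℝ) < 2 ^ N := by positivity
  have hh : (0 : ℝ) < L / 2 ^ N := by positivity
  set F : ℝ → ℝ := quasiPer φ α L N with hFdef
  have hFmeas : Measurable F := measurable_quasiPer N
  have hFbd : ∀ x, ‖F x‖ ≤ B := fun x => by
    rw [Real.norm_eq_abs]; exact abs_quasiPer_le hL hB hB0 N x
  have hImeas : MeasurableSet (Set.Ico α (α + L)) := measurableSet_Ico
  -- integrability of products
  have hbddF : ∃ C, ∀ x, ‖F x‖ ≤ C := ⟨B, hFbd⟩
  have hgcint : ∀ s : Set ℝ, IntegrableOn gc s := fun s => gc_int.integrableOn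
  have hgcF : ∀ s : Set ℝ, IntegrableOn (fun x => gc x * F x) s := fun s =>
    ((hgcint s).bdd_mul hFmeas.aestronglyMeasurable (ae_of_all _ hFbd)).congr
      (ae_of_all _ fun x => mul_comm _ _)
  have hgF : IntegrableOn (fun x => g x * F x) (Set.Ico α (α + L)) :=
    (hg.bdd_mul hFmeas.aestronglyMeasurable (ae_of_all _ hFbd)).congr
      (ae_of_all _ fun x => mul_comm _ _)
  have hgsubF : IntegrableOn (fun x => (g x - gc x) * F x) (Set.Ico α (α + L)) :=
    ((hg.sub (hgcint _)).bdd_mul hFmeas.aestronglyMeasurable (ae_of_all _ hFbd)).congr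
      (ae_of_all _ fun x => mul_comm _ _)
  -- split the integral
  have hsplit : (∫ x in Set.Ico α (α + L), g x * F x)
      = (∫ x in Set.Ico α (α + L), (g x - gc x) * F x)
        + ∫ x in Set.Ico α (α + L), gc x * F x := by
    rw [← integral_add hgsubF (hgcF _)]
    exact integral_congr_ae (ae_of_all _ fun x => by ring)
  -- first term
  have hT1 : ‖∫ x in Set.Ico α (α + L), (g x - gc x) * F x‖ ≤ ε / 4 := by
    have hbnd : ∀ᵐ x ∂(volume.restrict (Set.Ico α (α + L))),
        ‖(g x - gc x) * F x‖ ≤ B * ‖g x - gc x‖ := by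
      refine ae_of_all _ fun x => ?_
      rw [norm_mul, mul_comm]
      exact mul_le_mul_of_nonneg_right (hFbd x) (norm_nonneg _)
    have hstep : ‖∫ x in Set.Ico α (α + L), (g x - gc x) * F x‖
        ≤ ∫ x in Set.Ico α (α + L), B * ‖g x - gc x‖ :=
      norm_integral_le_of_norm_le ((hg.sub (hgcint _)).norm.const_mul B) hbnd
    have hnormint : (∫ x in Set.Ico α (α + L), ‖g x - gc x‖) ≤ ε / (4 * (B + 1)) := by
      have e1 : (∫ x in Set.Ico α (α + L), ‖g x - gc x‖)
          = ∫ x in Set.Ico α (α + L), ‖g₀ x - gc x‖ := by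
        refine setIntegral_congr_fun hImeas fun x hx => ?_
        rw [hg₀def, Set.indicator_of_mem hx]
      have e2 : (∫ x in Set.Ico α (α + L), ‖g₀ x - gc x‖) ≤ ∫ x, ‖g₀ x - gc x‖ :=
        setIntegral_le_integral (hg₀int.sub gc_int).norm
          (ae_of_all _ fun x => norm_nonneg _)
      rw [e1]; exact le_trans e2 gc_close
    have hfinal : B * (ε / (4 * (B + 1))) ≤ ε / 4 := by
      rw [mul_div_assoc', div_le_div_iff₀ (by positivity) (by norm_num : (0:ℝ) < 4)]
      nlinarith
    calc ‖∫ x in Set.Ico α (α + L), (g x - gc x) * F x‖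
        ≤ ∫ x in Set.Ico α (α + L), B * ‖g x - gc x‖ := hstep
      _ = B * ∫ x in Set.Ico α (α + L), ‖g x - gc x‖ := integral_const_mul _ _
      _ ≤ B * (ε / (4 * (B + 1))) := mul_le_mul_of_nonneg_left hnormint hB0
      _ ≤ ε / 4 := hfinal
  -- second term : decompose into the 2^N cells
  have hT2 : ‖∫ x in Set.Ico α (α + L), gc x * F x‖ ≤ ε / 4 := by
    set a : ℕ → ℝ := fun j => α + (j : ℝ) * (L / 2 ^ N) with hadef
    have ham : ∀ j : ℕ, a j ≤ a (j + 1) := by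
      intro j; simp only [hadef]; push_cast; nlinarith
    have hii : ∀ j : ℕ, j < 2 ^ N →
        IntervalIntegrable (fun x => gc x * F x) volume (a j) (a (j + 1)) := by
      intro j hj
      rw [intervalIntegrable_iff_integrableOn_Ioc_of_le (ham j)]
      exact hgcF _
    have hsum := intervalIntegral.sum_integral_adjacent_intervals
      (f := fun x => gc x * F x) (μ := volume) (a := a) (n := 2 ^ N) hii
    have ha0 : a 0 = α := by simp [hadef]
    have haN : a (2 ^ N) = α + L := by
      simp only [hadef]
      push_cast
      field_simp
    have hIeq : (∫ x in Set.Ico α (α + L), gc x * F x)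
        = ∑ j ∈ Finset.range (2 ^ N), ∫ x in a j..a (j + 1), gc x * F x := by
      rw [ico_eq_intervalIntegral _ (by linarith : α ≤ α + L), ← haN, ← ha0]
      exact hsum.symm
    -- per-cell bound
    have hcellbd : ∀ j : ℕ, j < 2 ^ N →
        ‖∫ x in a j..a (j + 1), gc x * F x‖
          ≤ ε / (4 * (B + 1) * (L + 1)) * B * (L / 2 ^ N) := by
      intro j hj
      have hcast : a (j + 1) = α + ((j : ℝ) + 1) * (L / 2 ^ N) := by
        simp only [hadef]; push_cast; ring
      have hcell0 : (∫ x in Set.Ico (a j) (a (j + 1)), F x) = 0 := by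
        have e1 : a j = α + (j : ℝ) * (L / 2 ^ N) := rfl
        rw [e1, hcast]
        exact cell_integral_zero hmeas hL hB hmean N hj
      have hFintc : IntegrableOn F (Set.Ico (a j) (a (j + 1))) :=
        Measure.integrableOn_of_bounded (M := B)
          (by rw [Real.volume_Ico]; exact ENNReal.ofReal_ne_top)
          hFmeas.aestronglyMeasurable (ae_of_all _ hFbd)
      have heq : (∫ x in Set.Ico (a j) (a (j + 1)), gc x * F x)
          = ∫ x in Set.Ico (a j) (a (j + 1)), (gc x - gc (a j)) * F x := by
        have : (∫ x in Set.Ico (a j) (a (j + 1)), (gc x - gc (a j)) * F x)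
            = (∫ x in Set.Ico (a j) (a (j + 1)), gc x * F x)
              - ∫ x in Set.Ico (a j) (a (j + 1)), gc (a j) * F x := by
          rw [← integral_sub (hgcF _) (hFintc.const_mul _)]
          exact integral_congr_ae (ae_of_all _ fun x => by ring)
        rw [this, integral_const_mul, hcell0, mul_zero, sub_zero]
      rw [← ico_eq_intervalIntegral _ (ham j), heq]
      have hbd : ∀ x ∈ Set.Ico (a j) (a (j + 1)),
          ‖(gc x - gc (a j)) * F x‖ ≤ ε / (4 * (B + 1) * (L + 1)) * B := by
        intro x hx
        have hdist : dist x (a j) < δ := by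
          rw [Real.dist_eq, abs_of_nonneg (by linarith [hx.1])]
          have hlt : x < a j + L / 2 ^ N := by
            have : a (j + 1) = a j + L / 2 ^ N := by
              simp only [hadef]; push_cast; ring
            rw [← this]; exact hx.2
          have h1 : x - a j < L / 2 ^ N := by linarith
          exact lt_trans h1 hN
        have hgcd : ‖gc x - gc (a j)‖ ≤ ε / (4 * (B + 1) * (L + 1)) := by
          rw [Real.norm_eq_abs, ← Real.dist_eq]
          exact (hδ' hdist).le
        rw [norm_mul]
        exact mul_le_mul hgcd (hFbd x) (norm_nonneg _) hε2.le
      have := norm_setIntegral_le_of_norm_le_const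
        (by rw [Real.volume_Ico]; exact ENNReal.ofReal_lt_top) hbd
      rw [Real.volume_real_Ico_of_le (ham j)] at this
      have hlen : a (j + 1) - a j = L / 2 ^ N := by
        simp only [hadef]; push_cast; ring
      rw [hlen] at this
      exact this
    have hsumbd : ‖∑ j ∈ Finset.range (2 ^ N), ∫ x in a j..a (j + 1), gc x * F x‖
        ≤ (2 ^ N : ℝ) * (ε / (4 * (B + 1) * (L + 1)) * B * (L / 2 ^ N)) := by
      calc ‖∑ j ∈ Finset.range (2 ^ N), ∫ x in a j..a (j + 1), gc x * F x‖
          ≤ ∑ j ∈ Finset.range (2 ^ N), ‖∫ x in a j..a (j + 1), gc x * F x‖ :=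
            norm_sum_le _ _
        _ ≤ ∑ j ∈ Finset.range (2 ^ N), ε / (4 * (B + 1) * (L + 1)) * B * (L / 2 ^ N) :=
            Finset.sum_le_sum fun j hj => hcellbd j (Finset.mem_range.1 hj)
        _ = (2 ^ N : ℝ) * (ε / (4 * (B + 1) * (L + 1)) * B * (L / 2 ^ N)) := by
            rw [Finset.sum_const, Finset.card_range, nsmul_eq_mul]
            push_cast; ring
    have hfin : (2 ^ N : ℝ) * (ε / (4 * (B + 1) * (L + 1)) * B * (L / 2 ^ N)) ≤ ε / 4 := by
      have hexp : (2 ^ N : ℝ) * (ε / (4 * (B + 1) * (L + 1)) * B * (L / 2 ^ N))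
          = ε / (4 * (B + 1) * (L + 1)) * B * L := by
        field_simp
      rw [hexp, div_mul_eq_mul_div, div_mul_eq_mul_div,
        div_le_div_iff₀ (by positivity) (by norm_num : (0:ℝ) < 4)]
      nlinarith
    rw [hIeq]
    exact le_trans hsumbd hfin
  rw [hsplit]
  calc ‖(∫ x in Set.Ico α (α + L), (g x - gc x) * F x)
        + ∫ x in Set.Ico α (α + L), gc x * F x‖
      ≤ ‖∫ x in Set.Ico α (α + L), (g x - gc x) * F x‖
        + ‖∫ x in Set.Ico α (α + L), gc x * F x‖ := norm_add_le _ _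
    _ ≤ ε / 4 + ε / 4 := add_le_add hT1 hT2
    _ < ε := by linarith
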